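/- Let n ≥ 2, and identify a pair (a, b) ∈ ℝ^2 with the vector (a, b, 0, …, 0) ∈ ℝ^n. For M > 0 and t ∈ ℝ define θ1 = (cos Mt, −sin Mt), θ2 = (sin Mt, cos Mt), θ3 = (θ1 + θ2)/√2, θ4 = (cos t, −sin t), θ5 = (sin t, cos t) (all viewed in ℝ^n), and d1 = cos(Mt)/M, d2 = sin(Mt)/M, d3 = (cos Mt + sin Mt)/(√2·M), d4 = cos t, d5 = sin t. Then there exists M0 > 0 (depending only on n) such that for every M ≥ M0, every t ∈ ℝ, and every unit vector ξ ∈ ℝ^n, the equations d_j^2 · p_{θk}(ξ) = d_k^2 · p_{θj}(ξ) for all 1 ≤ j < k ≤ 5 cannot all hold. -/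

import Mathlib

open scoped RealInnerProductSpace

/-- The vector `(a, b, 0, …, 0) ∈ ℝⁿ`. -/
noncomputable def planeVec (n : ℕ) (a b : ℝ) : EuclideanSpace ℝ (Fin n) :=
  (WithLp.equiv 2 (Fin n → ℝ)).symm
    (fun i => if (i : ℕ) = 0 then a else if (i : ℕ) = 1 then b else 0)

/-- The five directions `θ1, …, θ5` arising from the CGO-type solutions
`u1 = e^{M x1} cos(M x2)`, `u2 = e^{M x1} sin(M x2)`, `u3 = u1 + u2`, and
`u4, u5` given by the same formulas with `M` replaced by `1`, at `x2 = t`. -/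
noncomputable def cgoTheta (n : ℕ) (M t : ℝ) : Fin 5 → EuclideanSpace ℝ (Fin n) := fun j =>
  if j = 0 then planeVec n (Real.cos (M * t)) (-Real.sin (M * t))
  else if j = 1 then planeVec n (Real.sin (M * t)) (Real.cos (M * t))
  else if j = 2 then (Real.sqrt 2)⁻¹ •
      (planeVec n (Real.cos (M * t)) (-Real.sin (M * t)) +
        planeVec n (Real.sin (M * t)) (Real.cos (M * t)))
  else if j = 3 then planeVec n (Real.cos t) (-Real.sin t)
  else planeVec n (Real.sin t) (Real.cos t)

/-- The corresponding quantities `d_j = u_j/|∇u_j|`. -/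
noncomputable def cgoD (M t : ℝ) : Fin 5 → ℝ := fun j =>
  if j = 0 then Real.cos (M * t) / M
  else if j = 1 then Real.sin (M * t) / M
  else if j = 2 then (Real.cos (M * t) + Real.sin (M * t)) / (Real.sqrt 2 * M)
  else if j = 3 then Real.cos t
  else Real.sin t

set_option maxHeartbeats 1000000 in
lemma inner_planeVec {n : ℕ} (h0 : 0 < n) (h1 : 1 < n) (a b : ℝ)
    (ξ : EuclideanSpace ℝ (Fin n)) :
    ⟪planeVec n a b, ξ⟫ = a * ξ ⟨0, h0⟩ + b * ξ ⟨1, h1⟩ := by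
  have key : ∀ i : Fin n,
      (if (i : ℕ) = 0 then a else if (i : ℕ) = 1 then b else 0) * ξ i
        = (if i = (⟨0, h0⟩ : Fin n) then a * ξ ⟨0, h0⟩ else 0)
          + (if i = (⟨1, h1⟩ : Fin n) then b * ξ ⟨1, h1⟩ else 0) := by
    intro i
    rcases eq_or_ne i ⟨0, h0⟩ with rfl | hi0
    · simp
    · rcases eq_or_ne i ⟨1, h1⟩ with rfl | hi1
      · simp
      · have n0 : (i : ℕ) ≠ 0 := fun h => hi0 (Fin.ext h)
        have n1 : (i : ℕ) ≠ 1 := fun h => hi1 (Fin.ext h)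
        simp [n0, n1, hi0, hi1]
  simp only [planeVec, PiLp.inner_apply, RCLike.inner_apply, conj_trivial,
    WithLp.equiv_symm_apply, WithLp.ofLp_toLp]
  rw [Fintype.sum_congr _ _ (fun i => (mul_comm _ _).trans (key i)), Finset.sum_add_distrib, Finset.sum_ite_eq',
    Finset.sum_ite_eq']
  simp

set_option maxHeartbeats 1000000 in
/-- Algebraic content of Theorem 5.1 (ellipticity with five well-chosen solutions):
for `M` large enough (depending only on `n`), at every point and every unit frequency
`ξ`, the minor equations `d_j² p_{θk}(ξ) = d_k² p_{θj}(ξ)` for all `1 ≤ j < k ≤ 5`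
cannot all hold. -/
theorem stmt3 (n : ℕ) (hn : 2 ≤ n) :
    ∃ M0 > (0 : ℝ), ∀ M ≥ M0, ∀ t : ℝ, ∀ ξ : EuclideanSpace ℝ (Fin n), ‖ξ‖ = 1 →
      ¬ (∀ j k : Fin 5, j < k →
          (cgoD M t j) ^ 2 * (‖ξ‖ ^ 2 - 2 * ⟪cgoTheta n M t k, ξ⟫ ^ 2)
            = (cgoD M t k) ^ 2 * (‖ξ‖ ^ 2 - 2 * ⟪cgoTheta n M t j, ξ⟫ ^ 2)) := by
  refine ⟨2, by norm_num, fun M hM t ξ hξ h => ?_⟩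
  have h0 : 0 < n := by omega
  have h1 : 1 < n := by omega
  have hMpos : (0:ℝ) < M := by linarith
  have hM0 : (M:ℝ) ≠ 0 := ne_of_gt hMpos
  have hM1 : M^2 - 1 ≠ 0 := by nlinarith
  -- inner product computations
  have e0 : ⟪cgoTheta n M t 0, ξ⟫
      = Real.cos (M*t) * ξ ⟨0,h0⟩ + -Real.sin (M*t) * ξ ⟨1,h1⟩ :=
    inner_planeVec h0 h1 _ _ ξ
  have e1 : ⟪cgoTheta n M t 1, ξ⟫
      = Real.sin (M*t) * ξ ⟨0,h0⟩ + Real.cos (M*t) * ξ ⟨1,h1⟩ :=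
    inner_planeVec h0 h1 _ _ ξ
  have e3 : ⟪cgoTheta n M t 3, ξ⟫
      = Real.cos t * ξ ⟨0,h0⟩ + -Real.sin t * ξ ⟨1,h1⟩ :=
    inner_planeVec h0 h1 _ _ ξ
  have e4 : ⟪cgoTheta n M t 4, ξ⟫
      = Real.sin t * ξ ⟨0,h0⟩ + Real.cos t * ξ ⟨1,h1⟩ :=
    inner_planeVec h0 h1 _ _ ξ
  have e2 : ⟪cgoTheta n M t 2, ξ⟫
      = (Real.sqrt 2)⁻¹ * ((Real.cos (M*t) * ξ ⟨0,h0⟩ + -Real.sin (M*t) * ξ ⟨1,h1⟩)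
          + (Real.sin (M*t) * ξ ⟨0,h0⟩ + Real.cos (M*t) * ξ ⟨1,h1⟩)) := by
    show ⟪(Real.sqrt 2)⁻¹ • (planeVec n (Real.cos (M*t)) (-Real.sin (M*t))
        + planeVec n (Real.sin (M*t)) (Real.cos (M*t))), ξ⟫ = _
    rw [real_inner_smul_left, inner_add_left, inner_planeVec h0 h1, inner_planeVec h0 h1]
  have d0 : cgoD M t 0 = Real.cos (M*t) / M := rfl
  have d1 : cgoD M t 1 = Real.sin (M*t) / M := rfl
  have d2 : cgoD M t 2 = (Real.cos (M*t) + Real.sin (M*t)) / (Real.sqrt 2 * M) := rfl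
  have d3 : cgoD M t 3 = Real.cos t := rfl
  have d4 : cgoD M t 4 = Real.sin t := rfl
  have h03 := h 0 3 (by decide)
  have h04 := h 0 4 (by decide)
  have h13 := h 1 3 (by decide)
  have h14 := h 1 4 (by decide)
  have h23 := h 2 3 (by decide)
  have h24 := h 2 4 (by decide)
  rw [hξ, d0, d3, e0, e3] at h03
  rw [hξ, d0, d4, e0, e4] at h04
  rw [hξ, d1, d3, e1, e3] at h13
  rw [hξ, d1, d4, e1, e4] at h14
  rw [hξ, d2, d3, e2, e3] at h23
  rw [hξ, d2, d4, e2, e4] at h24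
  simp only [one_pow] at h03 h04 h13 h14 h23 h24
  -- eliminate √2
  have hd3 : ((Real.cos (M*t) + Real.sin (M*t)) / (Real.sqrt 2 * M))^2
      = (Real.cos (M*t) + Real.sin (M*t))^2 / (2*M^2) := by
    rw [div_pow, mul_pow, Real.sq_sqrt (by norm_num : (0:ℝ) ≤ 2)]
  have hw : ∀ w : ℝ, ((Real.sqrt 2)⁻¹ * w)^2 = w^2/2 := by
    intro w
    rw [mul_pow, inv_pow, Real.sq_sqrt (by norm_num : (0:ℝ) ≤ 2)]
    ring
  rw [hd3, hw] at h23 h24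
  set x := ξ ⟨0,h0⟩ with hx
  set y := ξ ⟨1,h1⟩ with hy
  set c := Real.cos (M*t) with hc
  set s := Real.sin (M*t) with hs
  set C := Real.cos t with hC
  set S := Real.sin t with hSdef
  have hcs : c^2 + s^2 = 1 := Real.cos_sq_add_sin_sq (M*t)
  have hCS : C^2 + S^2 = 1 := Real.cos_sq_add_sin_sq t
  -- key consequences: 1 - 2⟨θⱼ,ξ⟩² = dⱼ²·(2 - 2(x²+y²))·M²/... for j = 1,2,3
  have k1 : 1 - 2*(c*x - s*y)^2 = c^2/M^2 * (2 - 2*(x^2+y^2)) := by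
    linear_combination (-1 : ℝ) * h03 - h04
      + (-(1 - 2*(c*x - s*y)^2) - 2*c^2*(x^2+y^2)/M^2) * hCS
  have k2 : 1 - 2*(s*x + c*y)^2 = s^2/M^2 * (2 - 2*(x^2+y^2)) := by
    linear_combination (-1 : ℝ) * h13 - h14
      + (-(1 - 2*(s*x + c*y)^2) - 2*s^2*(x^2+y^2)/M^2) * hCS
  have k3 : 1 - ((c*x - s*y) + (s*x + c*y))^2 = (c+s)^2/(2*M^2) * (2 - 2*(x^2+y^2)) := by
    linear_combination (-1 : ℝ) * h23 - h24
      + (-(1 - ((c*x - s*y) + (s*x + c*y))^2) - (c+s)^2*(x^2+y^2)/M^2) * hCS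
  -- (M² - 1)·(2 - 2(x²+y²)) = 0, hence x² + y² = 1
  have k4 : (2 - 2*(x^2+y^2)) = (2 - 2*(x^2+y^2))/M^2 := by
    linear_combination k1 + k2 + (2*(x^2+y^2) + (2 - 2*(x^2+y^2))/M^2) * hcs
  have k4' : (2 - 2*(x^2+y^2)) * (M^2 - 1) = 0 := by
    have hm : M^2 * ((2 - 2*(x^2+y^2))/M^2) = 2 - 2*(x^2+y^2) := by
      field_simp
    linear_combination M^2 * k4 + hm
  have hu : 2 - 2*(x^2+y^2) = 0 := (mul_eq_zero.mp k4').resolve_right hM1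
  rw [hu, mul_zero] at k1 k2 k3
  -- now a² = b² = 1/2 and (a+b)² = 1: contradiction
  have hab : (c*x - s*y) * (s*x + c*y) = 0 := by
    linear_combination (-(1:ℝ)/2) * k3 + (1/4) * k1 + (1/4) * k2
  have hfin : (1:ℝ)/4 = 0 := by
    linear_combination ((c*x - s*y)*(s*x + c*y)) * hab
      - (s*x + c*y)^2 * ((-(1:ℝ)/2) * k1) - (1/2) * ((-(1:ℝ)/2) * k2)
  norm_num at hfin
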